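/- Fix n ≥ 1 and reals a ∈ [0,1), b, with the Spike setup: s_n w = (n:ℝ)^b on the window |(w:ℝ) - n/4| ≤ (n:ℝ)^a/2 and 0 otherwise, c_n(z) = |z| + s_n(|z|), C_n the diagonal cost matrix, B'_n the mixer sum, u_n the uniform vector, and ψ_f = (Matrix.exp (I·(π/4)·B'_n) * Matrix.exp (-I·(π/2)·C_n)).mulVec u_n. Let q = (2:ℝ)^(-(n:ℝ)+2) · (Real.sin (π·(n:ℝ)^b/4))² · ∑_{w ∈ Finset.range (n+1), |(w:ℝ) - n/4| ≤ (n:ℝ)^a/2} Nat.choose n w. If q ≤ 1, then ‖ψ_f 0‖² ≥ (1 - Real.sqrt q)². -/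

import Mathlib

open Matrix Complex

/-- The bit-flip (Pauli X on qubit `i`) matrix on `n`-bit strings. -/
noncomputable def pauliX (n : ℕ) (i : Fin n) :
    Matrix (Fin n → Bool) (Fin n → Bool) ℂ :=
  Matrix.of fun z z' => if z' = Function.update z i (!(z i)) then 1 else 0

/-- The Hamming weight of a bitstring: the number of `true` bits. -/
def hammingWeight {n : ℕ} (z : Fin n → Bool) : ℕ :=
  (Finset.univ.filter fun i => z i = true).card

/-- The rectangular spike of height `n^b` and width `n^a` centered at `n/4`. -/
noncomputable def spike (a b : ℝ) (n : ℕ) (w : ℕ) : ℝ :=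
  if |(w : ℝ) - (n : ℝ) / 4| ≤ (n : ℝ) ^ a / 2 then (n : ℝ) ^ b else 0

/- ### Pauli X basics -/

lemma pauliX_mulVec (n : ℕ) (i : Fin n) (v : (Fin n → Bool) → ℂ) :
    (pauliX n i).mulVec v = fun z => v (Function.update z i (!(z i))) := by
  funext z
  simp [pauliX, Matrix.mulVec, dotProduct]

lemma update_flip_flip {n : ℕ} (z : Fin n → Bool) (i : Fin n) :
    Function.update (Function.update z i (!(z i))) i (!(Function.update z i (!(z i)) i)) = z := by
  simp [Function.update_idem]

lemma pauliX_sq (n : ℕ) (i : Fin n) : pauliX n i * pauliX n i = 1 := by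
  ext z z'
  simp only [Matrix.mul_apply, pauliX, Matrix.of_apply]
  rw [Finset.sum_eq_single (Function.update z i (!(z i)))]
  · simp [update_flip_flip, Matrix.one_apply, eq_comm]
  · intro y _ hy; simp [hy]
  · simp

lemma pauliX_commute (n : ℕ) (i j : Fin n) : Commute (pauliX n i) (pauliX n j) := by
  rcases eq_or_ne i j with rfl | hij
  · exact Commute.refl _
  · ext z z'
    simp only [Matrix.mul_apply, pauliX, Matrix.of_apply]
    rw [Finset.sum_eq_single (Function.update z i (!(z i))),
        Finset.sum_eq_single (Function.update z j (!(z j)))]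
    · have h1 : Function.update z i (!(z i)) j = z j := Function.update_of_ne (Ne.symm hij) _ _
      have h2 : Function.update z j (!(z j)) i = z i := Function.update_of_ne hij _ _
      rw [h1, h2, Function.update_comm hij]
      simp
    · intro y _ hy; simp [hy]
    · simp
    · intro y _ hy; simp [hy]
    · simp

lemma pauliX_conjTranspose (n : ℕ) (i : Fin n) : (pauliX n i)ᴴ = pauliX n i := by
  ext z z'
  simp only [Matrix.conjTranspose_apply, pauliX, Matrix.of_apply]
  have hiff : z = Function.update z' i (!(z' i)) ↔ z' = Function.update z i (!(z i)) := by
    constructor <;> intro h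
    · rw [h]; exact (update_flip_flip z' i).symm
    · rw [h]; exact (update_flip_flip z i).symm
  by_cases h : z' = Function.update z i (!(z i))
  · rw [if_pos h, if_pos (hiff.2 h)]; simp
  · rw [if_neg h, if_neg (fun hc => h (hiff.1 hc))]; simp

/- ### Exponential of an involution -/

section ExpInvolution

variable {m : Type*} [Fintype m] [DecidableEq m]

attribute [local instance] Matrix.linftyOpNormedAddCommGroup Matrix.linftyOpNormedRing
  Matrix.linftyOpNormedAlgebra

lemma exp_smul_of_sq_eq_one {A : Matrix m m ℂ} (hA : A * A = 1) (c : ℂ) :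
    NormedSpace.exp (c • A) = Complex.cosh c • (1 : Matrix m m ℂ) + Complex.sinh c • A := by
  have hpow_even : ∀ k : ℕ, A ^ (2 * k) = 1 := by
    intro k
    rw [pow_mul, pow_two, hA, one_pow]
  have hpow_odd : ∀ k : ℕ, A ^ (2 * k + 1) = A := by
    intro k
    rw [pow_succ, hpow_even, one_mul]
  have hsumM : Summable fun n : ℕ => ((n.factorial : ℂ)⁻¹) • (c • A) ^ n :=
    NormedSpace.expSeries_summable' (𝕂 := ℂ) (c • A)
  have hterm : ∀ n : ℕ, ((n.factorial : ℂ)⁻¹) • (c • A) ^ n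
      = ((n.factorial : ℂ)⁻¹ * c ^ n) • A ^ n := by
    intro n
    rw [smul_pow, smul_smul]
  have hsumc : ∀ d : ℂ, Summable fun n : ℕ => (n.factorial : ℂ)⁻¹ * d ^ n := by
    intro d
    simpa [smul_eq_mul] using NormedSpace.expSeries_summable' (𝕂 := ℂ) d
  have hexpc : ∀ d : ℂ, Complex.exp d = ∑' n : ℕ, (n.factorial : ℂ)⁻¹ * d ^ n := by
    intro d
    rw [Complex.exp_eq_exp_ℂ, NormedSpace.exp_eq_tsum (𝕂 := ℂ)]
    simp [smul_eq_mul]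
  set E : ℂ := ∑' k : ℕ, ((2 * k).factorial : ℂ)⁻¹ * c ^ (2 * k) with hE
  set O : ℂ := ∑' k : ℕ, ((2 * k + 1).factorial : ℂ)⁻¹ * c ^ (2 * k + 1) with hO
  have hEO : E + O = Complex.exp c := by
    rw [hexpc]
    exact tsum_even_add_odd (f := fun n => ((n.factorial : ℂ))⁻¹ * c ^ n)
      ((hsumc c).comp_injective (fun a b => by omega))
      ((hsumc c).comp_injective (fun a b => by omega))
  have hEO' : E - O = Complex.exp (-c) := by
    have heven : (∑' k : ℕ, ((2 * k).factorial : ℂ)⁻¹ * (-c) ^ (2 * k)) = E := by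
      apply tsum_congr; intro k; rw [neg_pow, Even.neg_one_pow ⟨k, by ring⟩, one_mul]
    have hodd : (∑' k : ℕ, ((2 * k + 1).factorial : ℂ)⁻¹ * (-c) ^ (2 * k + 1)) = -O := by
      rw [← tsum_neg]
      apply tsum_congr; intro k
      rw [neg_pow, Odd.neg_one_pow ⟨k, by ring⟩]
      ring
    have := tsum_even_add_odd (f := fun n => ((n.factorial : ℂ))⁻¹ * (-c) ^ n)
      ((hsumc (-c)).comp_injective (fun a b => by omega))
      ((hsumc (-c)).comp_injective (fun a b => by omega))
    rw [heven, hodd] at this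
    rw [← hexpc] at this
    rw [← this]; ring
  have hcosh : Complex.cosh c = E := by
    rw [Complex.cosh, ← hEO, ← hEO']; ring
  have hsinh : Complex.sinh c = O := by
    rw [Complex.sinh, ← hEO, ← hEO']; ring
  rw [NormedSpace.exp_eq_tsum (𝕂 := ℂ)]
  have hsplit := tsum_even_add_odd (f := fun n : ℕ => ((n.factorial : ℂ))⁻¹ • (c • A) ^ n)
    (hsumM.comp_injective (fun a b => by omega))
    (hsumM.comp_injective (fun a b => by omega))
  beta_reduce at hsplit
  show (∑' n : ℕ, ((n.factorial : ℂ))⁻¹ • (c • A) ^ n) = _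
  rw [← hsplit]
  have hse : Summable (fun k : ℕ => (((2 * k).factorial : ℂ))⁻¹ * c ^ (2 * k)) := by
    have := (hsumc c).comp_injective (i := fun k : ℕ => 2 * k)
      (fun a b h => by simp only at h; omega)
    exact this
  have hso : Summable (fun k : ℕ => (((2 * k + 1).factorial : ℂ))⁻¹ * c ^ (2 * k + 1)) := by
    have := (hsumc c).comp_injective (i := fun k : ℕ => 2 * k + 1)
      (fun a b h => by simp only at h; omega)
    exact this
  have h1 : (∑' k : ℕ, ((2 * k).factorial : ℂ)⁻¹ • (c • A) ^ (2 * k))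
      = E • (1 : Matrix m m ℂ) := by
    rw [hE, ← Summable.tsum_smul_const hse]
    exact tsum_congr fun k => by rw [hterm, hpow_even]
  have h2 : (∑' k : ℕ, ((2 * k + 1).factorial : ℂ)⁻¹ • (c • A) ^ (2 * k + 1)) = O • A := by
    rw [hO, ← Summable.tsum_smul_const hso]
    exact tsum_congr fun k => by rw [hterm, hpow_odd]
  rw [h1, h2, hcosh, hsinh]

end ExpInvolution

/- ### The mixing factor -/

noncomputable def Fmat (n : ℕ) (i : Fin n) : Matrix (Fin n → Bool) (Fin n → Bool) ℂ :=
  (((Real.sqrt 2 / 2 : ℝ) : ℂ)) • (1 + Complex.I • pauliX n i)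

lemma exp_pauliX (n : ℕ) (i : Fin n) :
    NormedSpace.exp ((Complex.I * ((Real.pi : ℂ) / 4)) • pauliX n i) = Fmat n i := by
  rw [exp_smul_of_sq_eq_one (pauliX_sq n i)]
  have h4 : (Complex.I * ((Real.pi : ℂ) / 4)) = ((Real.pi / 4 : ℝ) : ℂ) * Complex.I := by
    push_cast; ring
  rw [h4, Complex.cosh_mul_I, Complex.sinh_mul_I, ← Complex.ofReal_cos, ← Complex.ofReal_sin,
    Real.cos_pi_div_four, Real.sin_pi_div_four, Fmat, smul_add, smul_smul]

lemma Fmat_commute (n : ℕ) (i j : Fin n) : Commute (Fmat n i) (Fmat n j) := by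
  unfold Fmat
  apply Commute.smul_left
  apply Commute.smul_right
  have h : Commute (Complex.I • pauliX n i) (Complex.I • pauliX n j) :=
    ((pauliX_commute n i j).smul_left _).smul_right _
  exact Commute.add_left (Commute.one_left _)
    (Commute.add_right (Commute.one_right _) h)

/- ### The intermediate vectors -/

noncomputable def gvec (n : ℕ) (S : Finset (Fin n)) : (Fin n → Bool) → ℂ :=
  fun z => (∏ j ∈ S, (if z j then 0 else 1)) *
    ∏ j ∈ Sᶜ, (((Real.sqrt 2 / 2 : ℝ) : ℂ) * (if z j then -Complex.I else 1))

lemma sqrt2div2_sq : ((Real.sqrt 2 / 2 : ℝ) : ℂ) * ((Real.sqrt 2 / 2 : ℝ) : ℂ) = 1 / 2 := by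
  have h2 : Real.sqrt 2 * Real.sqrt 2 = 2 := Real.mul_self_sqrt (by norm_num)
  rw [← Complex.ofReal_mul]
  have h : (Real.sqrt 2 / 2) * (Real.sqrt 2 / 2) = (1 / 2 : ℝ) := by nlinarith
  rw [h]
  norm_num

lemma Fmat_mulVec_gvec (n : ℕ) (i : Fin n) (S : Finset (Fin n)) (hi : i ∉ S) :
    (Fmat n i).mulVec (gvec n S) = gvec n (insert i S) := by
  have hss := sqrt2div2_sq
  funext z
  rw [Fmat, smul_mulVec, add_mulVec, one_mulVec, smul_mulVec, pauliX_mulVec]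
  simp only [Pi.smul_apply, Pi.add_apply, smul_eq_mul]
  set s : ℂ := ((Real.sqrt 2 / 2 : ℝ) : ℂ) with hsdef
  set z' := Function.update z i (!(z i)) with hz'def
  have hz'i : z' i = !(z i) := Function.update_self i _ z
  have hz'j : ∀ j, j ≠ i → z' j = z j := fun j hj => Function.update_of_ne hj _ _
  have hiSc : i ∈ Sᶜ := Finset.mem_compl.2 hi
  have hinot : i ∉ (insert i S)ᶜ := by simp
  have hcompl : Sᶜ = insert i ((insert i S)ᶜ) := by
    rw [Finset.compl_insert, Finset.insert_erase hiSc]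
  unfold gvec
  rw [hcompl]
  simp only [Finset.prod_insert hinot, Finset.prod_insert hi]
  set A := ∏ j ∈ S, (if z j then (0 : ℂ) else 1) with hA
  set B := ∏ j ∈ (insert i S)ᶜ, (s * (if z j then -Complex.I else 1)) with hB
  have hSz' : (∏ j ∈ S, (if z' j then (0 : ℂ) else 1)) = A := by
    refine Finset.prod_congr rfl fun j hj => ?_
    rw [hz'j j (fun h => hi (h ▸ hj))]
  have hBz' : (∏ j ∈ (insert i S)ᶜ, (s * (if z' j then -Complex.I else 1))) = B := by
    refine Finset.prod_congr rfl fun j hj => ?_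
    have hji : j ≠ i := by
      intro h
      exact (Finset.mem_compl.1 hj) (h ▸ Finset.mem_insert_self i S)
    rw [hz'j j hji]
  rw [hSz', hBz', hz'i]
  cases hzi : z i with
  | true =>
      simp only [hzi, Bool.not_true, Bool.false_eq_true, if_false, if_true]
      ring
  | false =>
      simp only [hzi, Bool.not_false, Bool.false_eq_true, if_false, if_true]
      linear_combination (2 * A * B) * hss + (-(s * s * A * B)) * Complex.I_mul_I

lemma prod_Fmat_mulVec (n : ℕ) (s : Finset (Fin n)) :
    ∀ S : Finset (Fin n), (∀ i ∈ s, i ∉ S) →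
    (s.noncommProd (Fmat n) (fun i _ j _ _ => Fmat_commute n i j)).mulVec (gvec n S)
      = gvec n (s ∪ S) := by
  induction s using Finset.induction_on with
  | empty =>
      intro S _
      rw [Finset.empty_union]; exact Matrix.one_mulVec _
  | @insert a s ha ih =>
      intro S hS
      refine (congrArg (fun M : Matrix (Fin n → Bool) (Fin n → Bool) ℂ => M.mulVec (gvec n S))
        (Finset.noncommProd_insert_of_notMem _ _ _ _ ha)).trans ?_
      refine (Matrix.mulVec_mulVec _ _ _).symm.trans ?_
      refine (congrArg (fun v => (Fmat n a).mulVec v)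
        (ih S (fun i hi => hS i (Finset.mem_insert_of_mem hi)))).trans ?_
      refine (Fmat_mulVec_gvec n a (s ∪ S)
          (by
            simp only [Finset.mem_union, not_or]
            exact ⟨ha, hS a (Finset.mem_insert_self a s)⟩)).trans ?_
      rw [Finset.insert_union]

/- ### Counting bitstrings by Hamming weight -/

lemma sum_hammingWeight {M : Type*} [AddCommMonoid M] (n : ℕ) (G : ℕ → M) :
    ∑ z : Fin n → Bool, G (hammingWeight z)
      = ∑ w ∈ Finset.range (n + 1), n.choose w • G w := by
  classical
  let e : Finset (Fin n) ≃ (Fin n → Bool) :=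
    { toFun := fun S i => decide (i ∈ S)
      invFun := fun z => Finset.univ.filter fun i => z i = true
      left_inv := fun S => by ext i; simp
      right_inv := fun z => by funext i; simp }
  have hwcard : ∀ S : Finset (Fin n), hammingWeight (e S) = S.card := by
    intro S
    unfold hammingWeight
    have : (Finset.univ.filter fun i => (e S) i = true) = S := by
      ext i; simp [e]
    rw [this]
  rw [← Equiv.sum_comp e (fun z => G (hammingWeight z))]
  have : ∀ S : Finset (Fin n), G (hammingWeight (e S)) = G S.card := fun S => by rw [hwcard]
  rw [Finset.sum_congr rfl (fun S _ => this S)]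
  rw [show (Finset.univ : Finset (Finset (Fin n)))
      = (Finset.univ : Finset (Fin n)).powerset from (Finset.powerset_univ).symm]
  rw [Finset.sum_powerset_apply_card (fun m => G m)]
  simp [Finset.card_univ]

/- ### Norm computations -/

lemma norm_exp_real_mul_I_sub_one (θ : ℝ) :
    ‖Complex.exp ((θ : ℂ) * Complex.I) - 1‖ ^ 2 = 4 * Real.sin (θ / 2) ^ 2 := by
  rw [Complex.exp_mul_I]
  have h1 : Complex.cos θ + Complex.sin θ * Complex.I - 1
      = Complex.ofReal (Real.cos θ - 1) + Complex.ofReal (Real.sin θ) * Complex.I := by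
    push_cast
    ring
  rw [h1, Complex.sq_norm]
  rw [Complex.normSq_apply]
  simp only [Complex.add_re, Complex.add_im, Complex.ofReal_re, Complex.ofReal_im,
    Complex.mul_re, Complex.mul_im, Complex.I_re, Complex.I_im]
  have hs := Real.sin_sq_add_cos_sq θ
  have hhalf : Real.sin (θ / 2) ^ 2 = 1 / 2 - Real.cos θ / 2 := by
    have h := Real.sin_sq_eq_half_sub (θ / 2)
    rw [h]
    norm_num [mul_div_cancel₀]
  nlinarith [hs, hhalf]

lemma mulVec_norm_sq_sum {m : Type*} [Fintype m] [DecidableEq m]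
    (U : Matrix m m ℂ) (hU : Uᴴ * U = 1) (v : m → ℂ) :
    ∑ x, ‖(U.mulVec v) x‖ ^ 2 = ∑ x, ‖v x‖ ^ 2 := by
  have expand : ∀ w : m → ℂ, star w ⬝ᵥ w = ((∑ x, ‖w x‖ ^ 2 : ℝ) : ℂ) := by
    intro w
    rw [dotProduct, Complex.ofReal_sum]
    refine Finset.sum_congr rfl fun x _ => ?_
    rw [Pi.star_apply, ← Complex.normSq_eq_norm_sq,
      Complex.normSq_eq_conj_mul_self]
    rfl
  have key : star (U.mulVec v) ⬝ᵥ (U.mulVec v) = star v ⬝ᵥ v := by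
    rw [Matrix.star_mulVec, ← Matrix.dotProduct_mulVec, Matrix.mulVec_mulVec, hU,
      Matrix.one_mulVec]
  rw [expand, expand] at key
  exact_mod_cast key

/- ### Phase computations -/

lemma exp_phase_nat (k : ℕ) :
    Complex.exp ((-Complex.I * ((Real.pi : ℂ) / 2)) * (k : ℂ)) = (-Complex.I) ^ k := by
  have h1 : Complex.exp (-Complex.I * ((Real.pi : ℂ) / 2)) = -Complex.I := by
    rw [show (-Complex.I * ((Real.pi : ℂ) / 2)) = ((-(Real.pi / 2) : ℝ) : ℂ) * Complex.I from by
      push_cast; ring]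
    rw [Complex.exp_mul_I, ← Complex.ofReal_cos, ← Complex.ofReal_sin, Real.cos_neg,
      Real.sin_neg, Real.cos_pi_div_two, Real.sin_pi_div_two]
    norm_num
  rw [show (-Complex.I * ((Real.pi : ℂ) / 2)) * (k : ℂ)
      = (k : ℂ) * (-Complex.I * ((Real.pi : ℂ) / 2)) from by ring,
    Complex.exp_nat_mul, h1]

lemma rpow_half_pow (n : ℕ) : ((Real.sqrt 2 / 2) : ℝ) ^ n = (2 : ℝ) ^ (-(n : ℝ) / 2) := by
  have h2 : Real.sqrt 2 * Real.sqrt 2 = 2 := Real.mul_self_sqrt (by norm_num)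
  have h : (Real.sqrt 2 / 2 : ℝ) = (2 : ℝ) ^ (-(1 : ℝ) / 2) := by
    rw [show (-(1 : ℝ) / 2) = -(1 / 2 : ℝ) by norm_num, Real.rpow_neg (by norm_num),
      ← Real.sqrt_eq_rpow, inv_eq_one_div]
    rw [div_eq_div_iff (by norm_num) (Real.sqrt_pos.2 (by norm_num)).ne']
    linarith
  rw [h, ← Real.rpow_natCast ((2 : ℝ) ^ (-(1 : ℝ) / 2)) n, ← Real.rpow_mul (by norm_num)]
  congr 1
  ring

lemma gvec_empty (n : ℕ) (z : Fin n → Bool) :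
    gvec n ∅ z = Complex.exp ((-Complex.I * ((Real.pi : ℂ) / 2)) * (hammingWeight z : ℂ)) *
      (((2 : ℝ) ^ (-(n : ℝ) / 2) : ℝ) : ℂ) := by
  unfold gvec
  rw [exp_phase_nat]
  simp only [Finset.prod_empty, one_mul, Finset.compl_empty]
  rw [Finset.prod_mul_distrib, Finset.prod_const, Finset.card_univ, Fintype.card_fin]
  have hite : (∏ j : Fin n, (if z j then -Complex.I else 1)) = (-Complex.I) ^ hammingWeight z := by
    rw [← Finset.prod_filter_mul_prod_filter_not Finset.univ (fun j => z j = true)]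
    have ha : (∏ j ∈ Finset.univ.filter (fun j => z j = true),
        (if z j then -Complex.I else (1 : ℂ))) = (-Complex.I) ^ hammingWeight z := by
      rw [Finset.prod_congr rfl (fun j hj => if_pos ((Finset.mem_filter.1 hj).2)),
        Finset.prod_const]
      rfl
    have hb : (∏ j ∈ Finset.univ.filter (fun j => ¬ z j = true),
        (if z j then -Complex.I else (1 : ℂ))) = 1 :=
      Finset.prod_eq_one (fun j hj => if_neg ((Finset.mem_filter.1 hj).2))
    rw [ha, hb, mul_one]
  rw [hite, ← rpow_half_pow, Complex.ofReal_pow]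
  ring

lemma abs_exp_phase (x : ℝ) :
    ‖Complex.exp ((-Complex.I * ((Real.pi : ℂ) / 2)) * (x : ℂ))‖ = 1 := by
  rw [show (-Complex.I * ((Real.pi : ℂ) / 2)) * (x : ℂ)
      = ((-(Real.pi / 2 * x) : ℝ) : ℂ) * Complex.I from by push_cast; ring,
    Complex.norm_exp_ofReal_mul_I]

lemma norm_exp_spike (sp : ℝ) :
    ‖Complex.exp ((-Complex.I * ((Real.pi : ℂ) / 2)) * (sp : ℂ)) - 1‖ ^ 2
      = 4 * Real.sin (Real.pi * sp / 4) ^ 2 := by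
  rw [show (-Complex.I * ((Real.pi : ℂ) / 2)) * (sp : ℂ)
      = ((-(Real.pi / 2 * sp) : ℝ) : ℂ) * Complex.I from by push_cast; ring,
    norm_exp_real_mul_I_sub_one, show -(Real.pi / 2 * sp) / 2 = -(Real.pi * sp / 4) from by ring,
    Real.sin_neg]
  ring

set_option maxHeartbeats 1000000

/-- Finite-`n` quantitative Spike bound: the success probability of QAOA1
with angles `(π/4, π/2)` at the global minimum is at least `(1 − √q)²`
where `q` is the weak-overlap quantity of the spike. -/
theorem qaoa1_spike_quantitative (n : ℕ) (hn : 1 ≤ n)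
    (a b : ℝ) (ha₀ : 0 ≤ a) (ha₁ : a < 1)
    (B' C : Matrix (Fin n → Bool) (Fin n → Bool) ℂ)
    (hB' : B' = ∑ i, pauliX n i)
    (hC : C = Matrix.diagonal fun z =>
      (((hammingWeight z : ℝ) + spike a b n (hammingWeight z) : ℝ) : ℂ))
    (u : (Fin n → Bool) → ℂ)
    (hu : u = fun _ => (((2 : ℝ) ^ (-(n : ℝ) / 2) : ℝ) : ℂ))
    (ψf : (Fin n → Bool) → ℂ)
    (hψf : ψf = (NormedSpace.exp ((Complex.I * ((Real.pi : ℂ) / 4)) • B') *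
        NormedSpace.exp ((-Complex.I * ((Real.pi : ℂ) / 2)) • C)).mulVec u)
    (q : ℝ)
    (hq : q = (2 : ℝ) ^ (-(n : ℝ) + 2) * Real.sin (Real.pi * (n : ℝ) ^ b / 4) ^ 2 *
        ∑ w ∈ (Finset.range (n + 1)).filter
            (fun w : ℕ => |(w : ℝ) - (n : ℝ) / 4| ≤ (n : ℝ) ^ a / 2),
          (Nat.choose n w : ℝ))
    (hq1 : q ≤ 1) :
    ‖ψf (fun _ => false)‖ ^ 2 ≥ (1 - Real.sqrt q) ^ 2 := by
  classical
  set μ : ℂ := -Complex.I * ((Real.pi : ℂ) / 2) with hμ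
  set U := NormedSpace.exp ((Complex.I * ((Real.pi : ℂ) / 4)) • B') with hUdef
  set D := NormedSpace.exp (μ • C) with hDdef
  -- U as a product of single-qubit factors
  have hUprod : U = Finset.univ.noncommProd (Fmat n) (fun i _ j _ _ => Fmat_commute n i j) := by
    have hcomm : ((Finset.univ : Finset (Fin n)) : Set (Fin n)).Pairwise
        (Function.onFun Commute (fun i => (Complex.I * ((Real.pi : ℂ) / 4)) • pauliX n i)) :=
      fun i _ j _ _ => ((pauliX_commute n i j).smul_left _).smul_right _
    rw [hUdef, hB', Finset.smul_sum,
      Matrix.exp_sum_of_commute Finset.univ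
        (fun i => (Complex.I * ((Real.pi : ℂ) / 4)) • pauliX n i) hcomm]
    exact Finset.noncommProd_congr rfl (fun x _ => exp_pauliX n x) _
  -- unitarity of U
  have hUunit : Uᴴ * U = 1 := by
    have hXherm : B'ᴴ = B' := by
      rw [hB', Matrix.conjTranspose_sum]
      exact Finset.sum_congr rfl fun i _ => pauliX_conjTranspose n i
    have h1 : ((Complex.I * ((Real.pi : ℂ) / 4)) • B')ᴴ
        = (-(Complex.I * ((Real.pi : ℂ) / 4))) • B' := by
      rw [Matrix.conjTranspose_smul, hXherm]
      congr 1
      simp [Complex.ext_iff]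
    rw [hUdef, ← Matrix.exp_conjTranspose, h1, ← Matrix.exp_add_of_commute]
    · rw [neg_smul, neg_add_cancel, NormedSpace.exp_zero]
    · exact ((Commute.refl B').smul_left _).smul_right _
  -- D is the diagonal phase matrix
  have hDdiag : D = Matrix.diagonal (fun z => Complex.exp (μ *
      (((hammingWeight z : ℝ) + spike a b n (hammingWeight z) : ℝ) : ℂ))) := by
    rw [hDdef, hC, ← Matrix.diagonal_smul, Matrix.exp_diagonal, Pi.exp_def]
    simp only [Pi.smul_apply, smul_eq_mul, ← Complex.exp_eq_exp_ℂ]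
  set w0 : (Fin n → Bool) → ℂ := gvec n ∅ with hw0
  set δ : (Fin n → Bool) → ℂ := fun z => D.mulVec u z - w0 z with hδ
  -- value of the final state at the all-zero string
  have hψval : ψf (fun _ => false) = 1 + U.mulVec δ (fun _ => false) := by
    have hsplit : D.mulVec u = w0 + δ := by
      funext z
      simp [hδ]
    have hUw0 : U.mulVec w0 = gvec n Finset.univ := by
      rw [hUprod, hw0]
      have h := prod_Fmat_mulVec n Finset.univ ∅ (fun i _ => Finset.notMem_empty i)
      rwa [Finset.union_empty] at h
    have hg1 : gvec n Finset.univ (fun _ => false) = 1 := by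
      unfold gvec
      simp
    rw [hψf, ← Matrix.mulVec_mulVec, hsplit, Matrix.mulVec_add, Pi.add_apply, hUw0, hg1]
  -- the perturbation norm
  have habs : ∀ z : Fin n → Bool, ‖δ z‖ ^ 2 = (2 : ℝ) ^ (-(n : ℝ))
      * (4 * Real.sin (Real.pi * spike a b n (hammingWeight z) / 4) ^ 2) := by
    intro z
    have hDu : D.mulVec u z = Complex.exp (μ *
        (((hammingWeight z : ℝ) + spike a b n (hammingWeight z) : ℝ) : ℂ)) * u z := by
      rw [hDdiag, Matrix.mulVec_diagonal]
    have hw0z : w0 z = Complex.exp (μ * ((hammingWeight z : ℝ) : ℂ)) *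
        (((2 : ℝ) ^ (-(n : ℝ) / 2) : ℝ) : ℂ) := by
      rw [hw0, gvec_empty, hμ]
      norm_cast
    have hfactor : δ z = Complex.exp (μ * ((hammingWeight z : ℝ) : ℂ)) *
        (Complex.exp (μ * ((spike a b n (hammingWeight z) : ℝ) : ℂ)) - 1) *
        (((2 : ℝ) ^ (-(n : ℝ) / 2) : ℝ) : ℂ) := by
      rw [hδ]
      simp only
      rw [hDu, hw0z, hu]
      rw [show μ * (((hammingWeight z : ℝ) + spike a b n (hammingWeight z) : ℝ) : ℂ)
          = μ * ((hammingWeight z : ℝ) : ℂ) + μ * ((spike a b n (hammingWeight z) : ℝ) : ℂ)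
          from by push_cast; ring, Complex.exp_add]
      ring
    rw [hfactor]
    rw [norm_mul, norm_mul, mul_pow, mul_pow, hμ, abs_exp_phase, norm_exp_spike]
    rw [Complex.norm_real, Real.norm_eq_abs,
      _root_.abs_of_nonneg (Real.rpow_nonneg (by norm_num) _)]
    rw [← Real.rpow_natCast ((2 : ℝ) ^ (-(n : ℝ) / 2)) 2, ← Real.rpow_mul (by norm_num)]
    rw [show -(n : ℝ) / 2 * (2 : ℕ) = -(n : ℝ) from by push_cast; ring]
    ring
  -- total perturbation equals q
  have hsum : ∑ z : Fin n → Bool, ‖δ z‖ ^ 2 = q := by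
    have h1 : ∑ z : Fin n → Bool, ‖δ z‖ ^ 2 = ∑ z : Fin n → Bool,
        (fun w => (2 : ℝ) ^ (-(n : ℝ)) * (4 * Real.sin (Real.pi * spike a b n w / 4) ^ 2))
          (hammingWeight z) :=
      Finset.sum_congr rfl fun z _ => habs z
    rw [h1, sum_hammingWeight n
      (fun w => (2 : ℝ) ^ (-(n : ℝ)) * (4 * Real.sin (Real.pi * spike a b n w / 4) ^ 2)), hq]
    rw [Finset.sum_filter, Finset.mul_sum]
    refine Finset.sum_congr rfl fun w _ => ?_
    unfold spike
    split_ifs with hwin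
    · rw [nsmul_eq_mul]
      rw [show (-(n : ℝ) + 2 : ℝ) = -(n : ℝ) + ((2 : ℕ) : ℝ) from by norm_num,
        Real.rpow_add (by norm_num) , Real.rpow_natCast]
      ring
    · simp
  -- conclusion
  have hq0 : 0 ≤ q := by
    rw [← hsum]
    positivity
  have hd2 : ‖U.mulVec δ (fun _ => false)‖ ^ 2 ≤ q := by
    have h1 : ∑ z : Fin n → Bool, ‖U.mulVec δ z‖ ^ 2 = q := by
      rw [mulVec_norm_sq_sum U hUunit δ, hsum]
    calc ‖U.mulVec δ (fun _ => false)‖ ^ 2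
        ≤ ∑ z : Fin n → Bool, ‖U.mulVec δ z‖ ^ 2 :=
          Finset.single_le_sum (f := fun z : Fin n → Bool => ‖U.mulVec δ z‖ ^ 2)
            (fun z _ => by positivity) (Finset.mem_univ _)
      _ = q := h1
  have hdle : ‖U.mulVec δ (fun _ => false)‖ ≤ Real.sqrt q := by
    have h := Real.sqrt_le_sqrt hd2
    rwa [Real.sqrt_sq (norm_nonneg _)] at h
  have hsqle : Real.sqrt q ≤ 1 := by
    rw [show (1 : ℝ) = Real.sqrt 1 from (Real.sqrt_one).symm]
    exact Real.sqrt_le_sqrt hq1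
  have hnorm : 1 - Real.sqrt q ≤ ‖ψf (fun _ => false)‖ := by
    rw [hψval]
    have h2 : ‖(1 : ℂ)‖ ≤ ‖1 + U.mulVec δ (fun _ => false)‖ + ‖U.mulVec δ (fun _ => false)‖ := by
      calc ‖(1 : ℂ)‖ = ‖(1 + U.mulVec δ (fun _ => false)) + (-(U.mulVec δ (fun _ => false)))‖ := by
            congr 1
            ring
        _ ≤ ‖1 + U.mulVec δ (fun _ => false)‖ + ‖-(U.mulVec δ (fun _ => false))‖ := norm_add_le _ _
        _ = ‖1 + U.mulVec δ (fun _ => false)‖ + ‖U.mulVec δ (fun _ => false)‖ := by rw [norm_neg]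
    simp only [norm_one] at h2
    linarith
  have h0 : 0 ≤ 1 - Real.sqrt q := by linarith
  exact pow_le_pow_left₀ h0 hnorm 2
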